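/- If a ground term t over {d, e, +, ·} is a sum of terms u_1, u_2, …, u_k (in any parenthesization) and t ≡ e in the equational theory E = {x+e=x, e+x=x, (x+y)+z=x+(y+z), (x+y)·z=y·(x·z), (d·x)·y=x·(y+x), e·x=x, d·e=e}, then u_i ≡ e for every i. -/

import Mathlib

/-- Ground terms over constants d, e with binary operations + (add) and · (app). -/
inductive Tm : Type
  | d : Tm
  | e : Tm
  | add : Tm → Tm → Tm
  | app : Tm → Tm → Tm
  deriving DecidableEq

open Tm

/-- Root rewrite steps: instances of the oriented rules. -/
inductive Root : Tm → Tm → Prop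
  | addE (x) : Root (add x e) x
  | eAdd (x) : Root (add e x) x
  | assoc (x y z) : Root (add (add x y) z) (add x (add y z))
  | appAdd (x y z) : Root (app (add x y) z) (app y (app x z))
  | appD (x y) : Root (app (app d x) y) (app x (add y x))
  | appE (x) : Root (app e x) x
  | dE : Root (app d e) e

/-- One rewrite step: a root step applied at some subterm position. -/
inductive Step : Tm → Tm → Prop
  | root {t u} : Root t u → Step t u
  | addL {t t' u} : Step t t' → Step (add t u) (add t' u)
  | addR {t u u'} : Step u u' → Step (add t u) (add t u')
  | appL {t t' u} : Step t t' → Step (app t u) (app t' u)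
  | appR {t u u'} : Step u u' → Step (app t u) (app t u')

/-- Zero or more rewrite steps. -/
def Steps : Tm → Tm → Prop := Relation.ReflTransGen Step

/-- A normal form is a term to which no rule applies. -/
def NormalForm (t : Tm) : Prop := ∀ u, ¬ Step t u

/-- Provable equality in the equational theory (reflexive symmetric transitive
congruence closure of the rule instances). -/
def TermEq : Tm → Tm → Prop := Relation.EqvGen Step

/-- `SumOf t l` means that `t` is a sum (in some parenthesization) of the
terms in the list `l`. -/
inductive SumOf : Tm → List Tm → Prop
  | single (t) : SumOf t [t]
  | node {a b la lb} : SumOf a la → SumOf b lb → SumOf (add a b) (la ++ lb)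

/-! ### Auxiliary normalization machinery -/

/-- Normalized sum of two normal forms. -/
def plus : Tm → Tm → Tm
  | .e, y => y
  | .d, .e => .d
  | .d, y => .add .d y
  | .app p q, .e => .app p q
  | .app p q, y => .add (.app p q) y
  | .add x y, z => .add x (plus y z)

/-- Normalized product of two normal forms. -/
def mul : Tm → Tm → Tm
  | .e, y => y
  | .add x y, z => mul y (mul x z)
  | .app .d x, y => mul x (plus y x)
  | .app p q, y => .app (.app p q) y
  | .d, .e => .e
  | .d, y => .app .d y

/-- The normal form of a term. -/
def nrm : Tm → Tm
  | .d => .d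
  | .e => .e
  | .add a b => plus (nrm a) (nrm b)
  | .app a b => mul (nrm a) (nrm b)

lemma plus_e (x : Tm) : plus x e = x := by
  induction x with
  | d => rfl
  | e => rfl
  | add a b iha ihb => simp [plus, ihb]
  | app a b iha ihb => rfl

lemma plus_ne_e {x : Tm} (hx : x ≠ e) (y : Tm) : plus x y ≠ e := by
  cases x with
  | d => cases y <;> simp [plus]
  | e => exact absurd rfl hx
  | add a b => simp [plus]
  | app a b => cases y <;> simp [plus]

lemma plus_eq_e {x y : Tm} (h : plus x y = e) : x = e ∧ y = e := by
  by_cases hx : x = e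
  · subst hx; exact ⟨rfl, h⟩
  · exact absurd h (plus_ne_e hx y)

lemma plus_assoc (x y z : Tm) : plus (plus x y) z = plus x (plus y z) := by
  induction x generalizing y z with
  | d =>
    by_cases hy : y = e
    · subst hy; simp [plus_e, plus]
    · have h1 : plus d y = add d y := by cases y <;> simp_all [plus]
      have h2 : plus y z ≠ e := plus_ne_e hy z
      have h3 : plus d (plus y z) = add d (plus y z) := by
        cases hpz : plus y z <;> simp_all [plus]
      rw [h1, h3]; simp [plus]
  | e => simp [plus]
  | add a b iha ihb =>
    simp [plus, ihb]
  | app p q ihp ihq =>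
    by_cases hy : y = e
    · subst hy; simp [plus_e, plus]
    · have h1 : plus (app p q) y = add (app p q) y := by cases y <;> simp_all [plus]
      have h2 : plus y z ≠ e := plus_ne_e hy z
      have h3 : plus (app p q) (plus y z) = add (app p q) (plus y z) := by
        cases hpz : plus y z <;> simp_all [plus]
      rw [h1, h3]; simp [plus]

lemma mul_plus (x y z : Tm) : mul (plus x y) z = mul y (mul x z) := by
  induction x generalizing y z with
  | d =>
    by_cases hy : y = e
    · subst hy; simp [plus_e, plus, mul]
    · have h1 : plus d y = add d y := by cases y <;> simp_all [plus]
      rw [h1]; simp [mul]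
  | e => simp [plus, mul]
  | add a b iha ihb =>
    simp only [plus, mul]
    rw [ihb]
  | app p q ihp ihq =>
    by_cases hy : y = e
    · subst hy; simp [plus_e, plus, mul]
    · have h1 : plus (app p q) y = add (app p q) y := by cases y <;> simp_all [plus]
      rw [h1]; simp [mul]

lemma mul_d_mul (x y : Tm) : mul (mul d x) y = mul x (plus y x) := by
  by_cases hx : x = e
  · subst hx; simp [mul, plus_e]
  · have h1 : mul d x = app d x := by cases x <;> simp_all [mul]
    rw [h1]; simp [mul]

lemma nrm_step {t u : Tm} (h : Step t u) : nrm t = nrm u := by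
  induction h with
  | root hr =>
    cases hr with
    | addE x => simp [nrm, plus_e]
    | eAdd x => simp [nrm, plus]
    | assoc x y z => simp [nrm, plus_assoc]
    | appAdd x y z => simp [nrm, mul_plus]
    | appD x y => simp [nrm, mul_d_mul]
    | appE x => simp [nrm, mul]
    | dE => simp [nrm, mul]
  | addL _ ih => simp [nrm, ih]
  | addR _ ih => simp [nrm, ih]
  | appL _ ih => simp [nrm, ih]
  | appR _ ih => simp [nrm, ih]

lemma nrm_termEq {t u : Tm} (h : TermEq t u) : nrm t = nrm u := by
  induction h with
  | rel _ _ h => exact nrm_step h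
  | refl _ => rfl
  | symm _ _ _ ih => exact ih.symm
  | trans _ _ _ _ _ ih1 ih2 => exact ih1.trans ih2

lemma steps_addL {a a' b : Tm} (h : Steps a a') : Steps (add a b) (add a' b) :=
  Relation.ReflTransGen.lift (fun t => add t b) (fun _ _ h => Step.addL h) _ _ h

lemma steps_addR {a b b' : Tm} (h : Steps b b') : Steps (add a b) (add a b') :=
  Relation.ReflTransGen.lift (fun t => add a t) (fun _ _ h => Step.addR h) _ _ h

lemma steps_appL {a a' b : Tm} (h : Steps a a') : Steps (app a b) (app a' b) :=
  Relation.ReflTransGen.lift (fun t => app t b) (fun _ _ h => Step.appL h) _ _ h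

lemma steps_appR {a b b' : Tm} (h : Steps b b') : Steps (app a b) (app a b') :=
  Relation.ReflTransGen.lift (fun t => app a t) (fun _ _ h => Step.appR h) _ _ h

lemma steps_plus (a b : Tm) : Steps (add a b) (plus a b) := by
  induction a generalizing b with
  | d =>
    cases b with
    | e => exact Relation.ReflTransGen.single (Step.root (Root.addE d))
    | d => exact Relation.ReflTransGen.refl
    | add _ _ => exact Relation.ReflTransGen.refl
    | app _ _ => exact Relation.ReflTransGen.refl
  | e => exact Relation.ReflTransGen.single (Step.root (Root.eAdd b))
  | add x y ihx ihy =>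
    exact (Relation.ReflTransGen.single (Step.root (Root.assoc x y b))).trans
      (steps_addR (ihy b))
  | app p q ihp ihq =>
    cases b with
    | e => exact Relation.ReflTransGen.single (Step.root (Root.addE _))
    | d => exact Relation.ReflTransGen.refl
    | add _ _ => exact Relation.ReflTransGen.refl
    | app _ _ => exact Relation.ReflTransGen.refl

lemma steps_mul (a b : Tm) : Steps (app a b) (mul a b) := by
  induction a generalizing b with
  | d =>
    cases b with
    | e => exact Relation.ReflTransGen.single (Step.root Root.dE)
    | d => exact Relation.ReflTransGen.refl
    | add _ _ => exact Relation.ReflTransGen.refl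
    | app _ _ => exact Relation.ReflTransGen.refl
  | e => exact Relation.ReflTransGen.single (Step.root (Root.appE b))
  | add x y ihx ihy =>
    have h1 : Steps (app (add x y) b) (app y (app x b)) :=
      Relation.ReflTransGen.single (Step.root (Root.appAdd x y b))
    have h2 : Steps (app y (app x b)) (app y (mul x b)) := steps_appR (ihx b)
    have h3 : Steps (app y (mul x b)) (mul y (mul x b)) := ihy _
    exact (h1.trans h2).trans h3
  | app p q ihp ihq =>
    cases p with
    | d =>
      have h1 : Steps (app (app d q) b) (app q (add b q)) :=
        Relation.ReflTransGen.single (Step.root (Root.appD q b))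
      have h2 : Steps (app q (add b q)) (app q (plus b q)) := steps_appR (steps_plus b q)
      have h3 : Steps (app q (plus b q)) (mul q (plus b q)) := ihq _
      exact (h1.trans h2).trans h3
    | e => exact Relation.ReflTransGen.refl
    | add _ _ => exact Relation.ReflTransGen.refl
    | app _ _ => exact Relation.ReflTransGen.refl

lemma steps_nrm (t : Tm) : Steps t (nrm t) := by
  induction t with
  | d => exact Relation.ReflTransGen.refl
  | e => exact Relation.ReflTransGen.refl
  | add a b iha ihb =>
    exact ((steps_addL iha).trans (steps_addR ihb)).trans (steps_plus _ _)
  | app a b iha ihb =>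
    exact ((steps_appL iha).trans (steps_appR ihb)).trans (steps_mul _ _)

lemma steps_termEq {t u : Tm} (h : Steps t u) : TermEq t u := by
  induction h with
  | refl => exact Relation.EqvGen.refl t
  | tail _ h ih => exact ih.trans _ _ _ (Relation.EqvGen.rel _ _ h)

lemma nrm_e_termEq {t : Tm} (h : nrm t = e) : TermEq t e := by
  have := steps_termEq (steps_nrm t)
  rwa [h] at this

lemma sumOf_nrm_e : ∀ (t : Tm) (l : List Tm), SumOf t l → nrm t = e → ∀ u ∈ l, TermEq u e := by
  intro t l hs
  induction hs with
  | single t =>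
    intro h u hu
    simp at hu; subst hu
    exact nrm_e_termEq h
  | node ha hb iha ihb =>
    intro h u hu
    have h' : plus (nrm _) (nrm _) = e := h
    obtain ⟨h1, h2⟩ := plus_eq_e h'
    rcases List.mem_append.mp hu with hu | hu
    · exact iha h1 u hu
    · exact ihb h2 u hu

/-- if a sum of terms is provably equal to e,
then each summand is provably equal to e. -/
theorem sum_eq_e_implies_summands_eq_e :
    ∀ (t : Tm) (l : List Tm), SumOf t l → TermEq t e → ∀ u ∈ l, TermEq u e := by
  intro t l hs ht
  exact sumOf_nrm_e t l hs (nrm_termEq ht)
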